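/- Let D(S) be strongly connected. Then the polytope P(S) = {u ∈ R^{|S|} : B(D(S))u = 0, 1^T u = 1, u ≥ 0} has dimension |S| - |V(S)|, i.e., the affine span of P(S) has dimension equal to the nullity of the matrix A(S) obtained from B(D(S)) by appending the all-ones row. -/

import Mathlib

/-- Prefix of length `L` of an `(L+1)`-gram. -/
def pre (q L : ℕ) (z : Fin (L + 1) → Fin q) : Fin L → Fin q := fun i => z i.castSucc

/-- Suffix of length `L` of an `(L+1)`-gram. -/
def suf (q L : ℕ) (z : Fin (L + 1) → Fin q) : Fin L → Fin q := fun i => z i.succ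

/-- Node set of the restricted de Bruijn graph. -/
def VS (q L : ℕ) (S : Finset (Fin (L + 1) → Fin q)) : Finset (Fin L → Fin q) :=
  S.image (pre q L) ∪ S.image (suf q L)

/-- Arc relation of `D(S)`. -/
def step (q L : ℕ) (S : Finset (Fin (L + 1) → Fin q)) (a b : Fin L → Fin q) : Prop :=
  ∃ z ∈ S, pre q L z = a ∧ suf q L z = b

/-- The polytope `P(S) = {u : B(D(S))u = 0, 1ᵀu = 1, u ≥ 0}` of normalized
flows on `D(S)`. -/
def PS (q L : ℕ) (S : Finset (Fin (L + 1) → Fin q)) : Set ({z // z ∈ S} → ℝ) :=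
  {u | (∀ v : Fin L → Fin q,
          ∑ z : {z // z ∈ S},
            ((if suf q L z.1 = v then (1 : ℝ) else 0) -
              (if pre q L z.1 = v then 1 else 0)) * u z = 0) ∧
       (∑ z : {z // z ∈ S}, u z = 1) ∧ ∀ z, 0 ≤ u z}

noncomputable section DimPSAux

namespace DimPSAux

variable (q L : ℕ) (S : Finset (Fin (L + 1) → Fin q))

/-- Incidence coefficient of arc `z` at node `v`. -/
def cf (z : {z // z ∈ S}) (v : Fin L → Fin q) : ℝ :=
  (if suf q L z.1 = v then (1 : ℝ) else 0) - (if pre q L z.1 = v then 1 else 0)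

lemma mem_PS_iff (u : {z // z ∈ S} → ℝ) :
    u ∈ PS q L S ↔ (∀ v, ∑ z : {z // z ∈ S}, cf q L S z v * u z = 0) ∧
      (∑ z : {z // z ∈ S}, u z = 1) ∧ ∀ z, 0 ≤ u z := Iff.rfl

lemma pre_mem (z : {z // z ∈ S}) : pre q L z.1 ∈ VS q L S :=
  Finset.mem_union_left _ (Finset.mem_image_of_mem _ z.2)

lemma suf_mem (z : {z // z ∈ S}) : suf q L z.1 ∈ VS q L S :=
  Finset.mem_union_right _ (Finset.mem_image_of_mem _ z.2)

/-- The matrix `A(S)` (incidence rows restricted to `V(S)`, with the all-ones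
row added to every row, which has the same kernel and full row rank). -/
def M : ({z // z ∈ S} → ℝ) →ₗ[ℝ] ({v // v ∈ VS q L S} → ℝ) where
  toFun u := fun v => ∑ z : {z // z ∈ S}, (cf q L S z v.1 + 1) * u z
  map_add' u u' := by
    funext v
    simp only [Pi.add_apply, mul_add]
    rw [Finset.sum_add_distrib]
  map_smul' c u := by
    funext v
    simp only [Pi.smul_apply, smul_eq_mul, RingHom.id_apply, Finset.mul_sum]
    exact Finset.sum_congr rfl fun z _ => by ring

lemma M_apply (u : {z // z ∈ S} → ℝ) (v : {v // v ∈ VS q L S}) :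
    M q L S u v = (∑ z : {z // z ∈ S}, cf q L S z v.1 * u z) +
      ∑ z : {z // z ∈ S}, u z := by
  simp only [M, LinearMap.coe_mk, AddHom.coe_mk]
  rw [← Finset.sum_add_distrib]
  exact Finset.sum_congr rfl fun z _ => by ring

/-- Flow along a walk from `a` to `b`. -/
lemma walkflow {a b : Fin L → Fin q} (h : Relation.ReflTransGen (step q L S) a b) :
    ∃ u : {z // z ∈ S} → ℝ, (∀ z, 0 ≤ u z) ∧
      ∀ v, ∑ z : {z // z ∈ S}, cf q L S z v * u z =
        (if b = v then (1 : ℝ) else 0) - (if a = v then 1 else 0) := by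
  induction h with
  | refl => exact ⟨0, fun z => le_refl 0, fun v => by simp⟩
  | @tail b c _ hbc ih =>
    obtain ⟨u, hu0, hu⟩ := ih
    obtain ⟨z0, hz0S, hpre, hsuf⟩ := hbc
    refine ⟨u + fun z => if z = ⟨z0, hz0S⟩ then 1 else 0, fun z => ?_, fun v => ?_⟩
    · have : (0 : ℝ) ≤ if z = ⟨z0, hz0S⟩ then 1 else 0 := by positivity
      exact add_nonneg (hu0 z) this
    · simp only [Pi.add_apply, mul_add]
      rw [Finset.sum_add_distrib, hu v]
      have : ∑ z : {z // z ∈ S},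
          cf q L S z v * (if z = ⟨z0, hz0S⟩ then (1 : ℝ) else 0) =
          cf q L S ⟨z0, hz0S⟩ v := by
        rw [Finset.sum_congr rfl
          (fun z _ => (by split <;> simp [*] :
            cf q L S z v * (if z = ⟨z0, hz0S⟩ then (1 : ℝ) else 0) =
            if z = ⟨z0, hz0S⟩ then cf q L S z v else 0))]
        simp [Finset.sum_ite_eq']
      rw [this]
      simp only [cf, hpre, hsuf]
      ring

/-- A strictly positive normalized circulation. -/
lemma exists_u0 (hS : S.Nonempty)
    (hconn : ∀ a ∈ VS q L S, ∀ b ∈ VS q L S,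
      Relation.ReflTransGen (step q L S) a b) :
    ∃ u0 : {z // z ∈ S} → ℝ, u0 ∈ PS q L S ∧ ∀ z, 0 < u0 z := by
  have hne : Nonempty {z // z ∈ S} := ⟨⟨hS.choose, hS.choose_spec⟩⟩
  have h : ∀ z : {z // z ∈ S}, ∃ u : {z // z ∈ S} → ℝ, (∀ z', 0 ≤ u z') ∧
      ∀ v, ∑ z' : {z // z ∈ S}, cf q L S z' v * u z' =
        (if pre q L z.1 = v then (1 : ℝ) else 0) -
          (if suf q L z.1 = v then 1 else 0) :=
    fun z => walkflow q L S
      (hconn _ (suf_mem q L S z) _ (pre_mem q L S z))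
  choose f hf0 hfB using h
  set w : {z // z ∈ S} → ℝ :=
    fun z => ∑ z' : {z // z ∈ S}, ((if z = z' then (1 : ℝ) else 0) + f z' z) with hw
  have hw1 : ∀ z, (1 : ℝ) ≤ w z := by
    intro z
    have h1 : (1 : ℝ) ≤ (if z = z then (1 : ℝ) else 0) + f z z := by
      simp [hf0 z z]
    refine h1.trans (Finset.single_le_sum (f := fun z' =>
      (if z = z' then (1 : ℝ) else 0) + f z' z) (fun z' _ => ?_) (Finset.mem_univ z))
    have : (0 : ℝ) ≤ if z = z' then 1 else 0 := by positivity
    exact add_nonneg this (hf0 z' z)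
  have hwB : ∀ v, ∑ z : {z // z ∈ S}, cf q L S z v * w z = 0 := by
    intro v
    simp only [hw, Finset.mul_sum]
    rw [Finset.sum_comm]
    refine Finset.sum_eq_zero fun z' _ => ?_
    have e1 : ∑ z : {z // z ∈ S},
        cf q L S z v * ((if z = z' then (1 : ℝ) else 0) + f z' z) =
        (∑ z : {z // z ∈ S}, cf q L S z v * (if z = z' then (1 : ℝ) else 0)) +
        ∑ z : {z // z ∈ S}, cf q L S z v * f z' z := by
      simp only [mul_add]; rw [Finset.sum_add_distrib]
    rw [e1, hfB z' v]
    have e2 : ∑ z : {z // z ∈ S},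
        cf q L S z v * (if z = z' then (1 : ℝ) else 0) = cf q L S z' v := by
      rw [Finset.sum_congr rfl
        (fun z _ => (by split <;> simp [*] :
          cf q L S z v * (if z = z' then (1 : ℝ) else 0) =
          if z = z' then cf q L S z v else 0))]
      simp [Finset.sum_ite_eq']
    rw [e2]
    simp only [cf]
    ring
  set T : ℝ := ∑ z : {z // z ∈ S}, w z with hT
  have hTpos : 0 < T := by
    have : (0 : ℝ) < w (Classical.arbitrary _) := lt_of_lt_of_le one_pos (hw1 _)
    exact Finset.sum_pos (fun z _ => lt_of_lt_of_le one_pos (hw1 z))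
      ⟨Classical.arbitrary _, Finset.mem_univ _⟩
  refine ⟨fun z => T⁻¹ * w z, ⟨fun v => ?_, ?_, fun z => ?_⟩, fun z => ?_⟩
  · show ∑ z : {z // z ∈ S}, cf q L S z v * (T⁻¹ * w z) = 0
    have e : ∑ z : {z // z ∈ S}, cf q L S z v * (T⁻¹ * w z) =
        T⁻¹ * ∑ z : {z // z ∈ S}, cf q L S z v * w z := by
      rw [Finset.mul_sum]; exact Finset.sum_congr rfl fun z _ => by ring
    rw [e, hwB v, mul_zero]
  · show ∑ z : {z // z ∈ S}, T⁻¹ * w z = 1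
    rw [← Finset.mul_sum, ← hT, inv_mul_cancel₀ (ne_of_gt hTpos)]
  · exact le_of_lt (mul_pos (inv_pos.mpr hTpos) (lt_of_lt_of_le one_pos (hw1 z)))
  · exact mul_pos (inv_pos.mpr hTpos) (lt_of_lt_of_le one_pos (hw1 z))

end DimPSAux

end DimPSAux

/-- If `D(S)` is strongly connected, the polytope `P(S)` has dimension
`|S| - |V(S)|`. -/
theorem dim_PS (q L : ℕ) (S : Finset (Fin (L + 1) → Fin q))
    (hconn : ∀ a ∈ VS q L S, ∀ b ∈ VS q L S,
      Relation.ReflTransGen (step q L S) a b) :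
    Module.finrank ℝ (affineSpan ℝ (PS q L S)).direction =
      S.card - (VS q L S).card := by
  classical
  rcases eq_or_ne S ∅ with hSe | hSe
  · subst hSe
    haveI : IsEmpty {z // z ∈ (∅ : Finset (Fin (L + 1) → Fin q))} :=
      ⟨fun z => (Finset.notMem_empty _ z.2)⟩
    have hP : PS q L (∅ : Finset (Fin (L + 1) → Fin q)) = ∅ := by
      ext u
      simp only [PS, Set.mem_setOf_eq, Set.mem_empty_iff_false, iff_false]
      rintro ⟨-, h, -⟩
      rw [Finset.univ_eq_empty, Finset.sum_empty] at h
      exact absurd h (by norm_num)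
    rw [hP]
    simp [VS]
  · have hS : S.Nonempty := Finset.nonempty_iff_ne_empty.mpr hSe
    obtain ⟨u0, hu0P, hu0pos⟩ := DimPSAux.exists_u0 q L S hS hconn
    obtain ⟨hu0B, hu0sum, -⟩ := (DimPSAux.mem_PS_iff q L S u0).mp hu0P
    haveI hzne : Nonempty {z // z ∈ S} := ⟨⟨hS.choose, hS.choose_spec⟩⟩
    have hVne : (VS q L S).Nonempty :=
      ⟨pre q L hS.choose, DimPSAux.pre_mem q L S ⟨hS.choose, hS.choose_spec⟩⟩
    haveI hvne : Nonempty {v // v ∈ VS q L S} := ⟨⟨_, hVne.choose_spec⟩⟩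
    have hm1 : 1 ≤ (VS q L S).card := Finset.card_pos.mpr hVne
    have hmR : ((VS q L S).card : ℝ) ≠ 0 := by positivity
    -- M maps members of PS to the all-ones vector
    have hMone : ∀ u ∈ PS q L S, DimPSAux.M q L S u = fun _ => 1 := by
      intro u hu
      obtain ⟨h1, h2, -⟩ := (DimPSAux.mem_PS_iff q L S u).mp hu
      funext v
      rw [DimPSAux.M_apply, h1 v.1, h2, zero_add]
    -- characterization of the kernel of M
    have hker : ∀ w : {z // z ∈ S} → ℝ, DimPSAux.M q L S w = 0 →
        (∀ v, ∑ z : {z // z ∈ S}, DimPSAux.cf q L S z v * w z = 0) ∧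
        (∑ z : {z // z ∈ S}, w z = 0) := by
      intro w hw
      have hrow : ∀ v : {v // v ∈ VS q L S},
          (∑ z : {z // z ∈ S}, DimPSAux.cf q L S z v.1 * w z) +
            ∑ z : {z // z ∈ S}, w z = 0 := by
        intro v
        rw [← DimPSAux.M_apply, hw]
        rfl
      have hcol : ∀ z : {z // z ∈ S},
          ∑ v : {v // v ∈ VS q L S}, DimPSAux.cf q L S z v.1 = 0 := by
        intro z
        have e : ∑ v : {v // v ∈ VS q L S}, DimPSAux.cf q L S z v.1
            = ∑ v ∈ VS q L S, DimPSAux.cf q L S z v :=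
          (Finset.sum_subtype _ (fun _ => Iff.rfl) _).symm
        rw [e]
        simp only [DimPSAux.cf]
        rw [Finset.sum_sub_distrib, Finset.sum_ite_eq, Finset.sum_ite_eq]
        simp [DimPSAux.pre_mem q L S z, DimPSAux.suf_mem q L S z]
      have hsum0 : ∑ z : {z // z ∈ S}, w z = 0 := by
        have h1 : ∑ v : {v // v ∈ VS q L S},
            ((∑ z : {z // z ∈ S}, DimPSAux.cf q L S z v.1 * w z) +
              ∑ z : {z // z ∈ S}, w z) = 0 :=
          Finset.sum_eq_zero fun v _ => hrow v
        rw [Finset.sum_add_distrib] at h1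
        have h2 : ∑ v : {v // v ∈ VS q L S},
            ∑ z : {z // z ∈ S}, DimPSAux.cf q L S z v.1 * w z = 0 := by
          rw [Finset.sum_comm]
          refine Finset.sum_eq_zero fun z _ => ?_
          rw [← Finset.sum_mul, hcol z, zero_mul]
        rw [h2, zero_add, Finset.sum_const, Finset.card_univ, Fintype.card_coe,
          nsmul_eq_mul] at h1
        exact (mul_eq_zero.mp h1).resolve_left hmR
      refine ⟨fun v => ?_, hsum0⟩
      by_cases hv : v ∈ VS q L S
      · have h := hrow ⟨v, hv⟩
        rw [hsum0, add_zero] at h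
        exact h
      · refine Finset.sum_eq_zero fun z _ => ?_
        have h1 : suf q L z.1 ≠ v := fun h => hv (h ▸ DimPSAux.suf_mem q L S z)
        have h2 : pre q L z.1 ≠ v := fun h => hv (h ▸ DimPSAux.pre_mem q L S z)
        simp [DimPSAux.cf, h1, h2]
    -- the vector span of PS is the kernel of M
    have hspan : vectorSpan ℝ (PS q L S) = LinearMap.ker (DimPSAux.M q L S) := by
      apply le_antisymm
      · rw [vectorSpan_def, Submodule.span_le]
        rintro w ⟨u, hu, u', hu', rfl⟩
        simp only [SetLike.mem_coe, LinearMap.mem_ker, vsub_eq_sub]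
        rw [map_sub, hMone u hu, hMone u' hu']
        simp
      · intro w hw
        obtain ⟨hB, hsum⟩ := hker w (LinearMap.mem_ker.mp hw)
        by_cases hw0 : w = 0
        · subst hw0
          exact Submodule.zero_mem _
        · set δ : ℝ := Finset.univ.inf' Finset.univ_nonempty (fun z => u0 z) with hδdef
          have hδ : 0 < δ := (Finset.lt_inf'_iff _).mpr fun z _ => hu0pos z
          set C : ℝ := Finset.univ.sup' Finset.univ_nonempty (fun z => |w z|) + 1
            with hCdef
          have hCw : ∀ z, |w z| ≤ C - 1 := by
            intro z
            have := Finset.le_sup' (fun z => |w z|) (Finset.mem_univ z)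
            simp only [hCdef]
            linarith
          have hC : 0 < C := by
            have h1 := abs_nonneg (w (Classical.arbitrary _))
            have h2 := hCw (Classical.arbitrary _)
            linarith
          set ε : ℝ := δ / C with hεdef
          have hε : 0 < ε := div_pos hδ hC
          have hεC : ε * C = δ := div_mul_cancel₀ δ (ne_of_gt hC)
          have hnn : ∀ z, 0 ≤ u0 z + ε * w z := by
            intro z
            have h1 : δ ≤ u0 z := Finset.inf'_le _ (Finset.mem_univ z)
            have h2 : |w z| ≤ C - 1 := hCw z
            have h3 : -(C - 1) ≤ w z := neg_le_of_abs_le h2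
            nlinarith [hε.le]
          have hu1 : u0 + ε • w ∈ PS q L S := by
            rw [DimPSAux.mem_PS_iff]
            refine ⟨fun v => ?_, ?_, fun z => ?_⟩
            · have e : ∑ z : {z // z ∈ S},
                  DimPSAux.cf q L S z v * (u0 z + ε * w z) =
                  (∑ z : {z // z ∈ S}, DimPSAux.cf q L S z v * u0 z) +
                    ε * ∑ z : {z // z ∈ S}, DimPSAux.cf q L S z v * w z := by
                rw [Finset.mul_sum, ← Finset.sum_add_distrib]
                exact Finset.sum_congr rfl fun z _ => by ring
              simp only [Pi.add_apply, Pi.smul_apply, smul_eq_mul]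
              rw [e, hu0B v, hB v]
              ring
            · simp only [Pi.add_apply, Pi.smul_apply, smul_eq_mul]
              rw [Finset.sum_add_distrib, hu0sum, ← Finset.mul_sum, hsum]
              ring
            · simpa using hnn z
          have hmem : (u0 + ε • w) -ᵥ u0 ∈ vectorSpan ℝ (PS q L S) :=
            vsub_mem_vectorSpan ℝ hu1 hu0P
          have he : (u0 + ε • w) -ᵥ u0 = ε • w := by
            rw [vsub_eq_sub]
            abel
          rw [he] at hmem
          have h := (vectorSpan ℝ (PS q L S)).smul_mem ε⁻¹ hmem
          rwa [smul_smul, inv_mul_cancel₀ (ne_of_gt hε), one_smul] at h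
    -- M is surjective
    have hsurj : LinearMap.range (DimPSAux.M q L S) = ⊤ := by
      set R := LinearMap.range (DimPSAux.M q L S) with hR
      set v0 : {v // v ∈ VS q L S} := ⟨hVne.choose, hVne.choose_spec⟩ with hv0
      have hone : (fun _ : {v // v ∈ VS q L S} => (1 : ℝ)) ∈ R :=
        LinearMap.mem_range.mpr ⟨u0, hMone u0 hu0P⟩
      have hd : ∀ v : {v // v ∈ VS q L S},
          (fun w : {v // v ∈ VS q L S} =>
            (if v.1 = w.1 then (1 : ℝ) else 0) -
              (if v0.1 = w.1 then 1 else 0)) ∈ R := by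
        intro v
        obtain ⟨f, hf0, hfB⟩ :=
          DimPSAux.walkflow q L S (hconn _ v0.2 _ v.2)
        refine LinearMap.mem_range.mpr ⟨f - (∑ z : {z // z ∈ S}, f z) • u0, ?_⟩
        funext ww
        rw [map_sub, map_smul]
        simp only [Pi.sub_apply, Pi.smul_apply, smul_eq_mul]
        rw [DimPSAux.M_apply, DimPSAux.M_apply, hfB ww.1, hu0B ww.1, hu0sum]
        ring
      have hchi0 : (fun w : {v // v ∈ VS q L S} =>
          if v0.1 = w.1 then (1 : ℝ) else 0) ∈ R := by
        have hmemb := R.smul_mem ((VS q L S).card : ℝ)⁻¹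
          (R.sub_mem hone (Submodule.sum_mem R fun v (_ : v ∈ Finset.univ) => hd v))
        have e : (((VS q L S).card : ℝ)⁻¹ •
            ((fun _ : {v // v ∈ VS q L S} => (1 : ℝ)) -
              ∑ v : {v // v ∈ VS q L S}, (fun w : {v // v ∈ VS q L S} =>
                (if v.1 = w.1 then (1 : ℝ) else 0) -
                  (if v0.1 = w.1 then 1 else 0)))) =
            fun w : {v // v ∈ VS q L S} => if v0.1 = w.1 then (1 : ℝ) else 0 := by
          funext ww
          simp only [Pi.smul_apply, Pi.sub_apply, Finset.sum_apply, smul_eq_mul]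
          have e1 : ∑ v : {v // v ∈ VS q L S},
              ((if v.1 = ww.1 then (1 : ℝ) else 0) -
                (if v0.1 = ww.1 then 1 else 0)) =
              1 - ((VS q L S).card : ℝ) * (if v0.1 = ww.1 then 1 else 0) := by
            rw [Finset.sum_sub_distrib, Finset.sum_const, Finset.card_univ,
              Fintype.card_coe, nsmul_eq_mul]
            congr 1
            have e2 : ∀ v : {v // v ∈ VS q L S},
                (if v.1 = ww.1 then (1 : ℝ) else 0) =
                  if v = ww then 1 else 0 := by
              intro v
              by_cases h : v = ww
              · subst h; simp
              · rw [if_neg h, if_neg (fun hh => h (Subtype.ext hh))]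
            rw [Finset.sum_congr rfl fun v _ => e2 v]
            simp [Finset.sum_ite_eq']
          rw [e1]
          field_simp
          ring
        rw [← e]
        exact hmemb
      have hchi : ∀ v : {v // v ∈ VS q L S},
          (fun w : {v // v ∈ VS q L S} =>
            if v.1 = w.1 then (1 : ℝ) else 0) ∈ R := by
        intro v
        have := R.add_mem (hd v) hchi0
        have e : ((fun w : {v // v ∈ VS q L S} =>
            (if v.1 = w.1 then (1 : ℝ) else 0) - (if v0.1 = w.1 then 1 else 0)) +
            fun w : {v // v ∈ VS q L S} => if v0.1 = w.1 then (1 : ℝ) else 0) =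
            fun w : {v // v ∈ VS q L S} => if v.1 = w.1 then (1 : ℝ) else 0 := by
          funext ww
          simp only [Pi.add_apply]
          ring
        rwa [e] at this
      rw [eq_top_iff]
      intro g _
      have e : g = ∑ v : {v // v ∈ VS q L S},
          g v • (fun w : {v // v ∈ VS q L S} =>
            if v.1 = w.1 then (1 : ℝ) else 0) := by
        funext ww
        rw [Finset.sum_apply]
        simp only [Pi.smul_apply, smul_eq_mul]
        have e2 : ∀ v : {v // v ∈ VS q L S},
            g v * (if v.1 = ww.1 then (1 : ℝ) else 0) =
              if v = ww then g v else 0 := by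
          intro v
          rcases eq_or_ne v ww with h | h
          · simp [h]
          · have h' : (v : Fin L → Fin q) ≠ ww := fun hh => h (Subtype.ext hh)
            simp [h, h']
        rw [Finset.sum_congr rfl fun v _ => e2 v]
        simp [Finset.sum_ite_eq']
      rw [e]
      exact Submodule.sum_mem R fun v _ => R.smul_mem (g v) (hchi v)
    -- conclude by rank-nullity
    rw [direction_affineSpan, hspan]
    have hrn := LinearMap.finrank_range_add_finrank_ker (DimPSAux.M q L S)
    rw [hsurj, finrank_top, Module.finrank_pi, Module.finrank_pi,
      Fintype.card_coe, Fintype.card_coe] at hrn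
    omega
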